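/- (Optimality of t-rank-k tensor representation over rank-k matrix representation.) Let M₃,…,M_p be invertible with each M_k = c_k W_k, c_k ≠ 0 and W_k orthogonal, let A ∈ ℝ^{n₁×n₂×⋯×n_p} have t-SVDM A = U ⋆M S ⋆M Vᵀ with t-rank-k truncation A_k, and let A_mat ∈ ℝ^{(n₁n₃⋯n_p)×n₂} be the matrix whose j-th column is the vectorization of the j-th lateral slice A(:,j,:,…,:) of A. If A_k,mat denotes a best rank-k approximation of A_mat in the Frobenius norm (e.g., the rank-k truncated matrix SVD of A_mat), then ‖A − A_k‖_F ≤ ‖A_mat − A_k,mat‖_F. -/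

import Mathlib

open Matrix

/-!
Order-`p` real tensors (`p = q + 2`) are represented as families of frontal
slices: a tensor `A ∈ ℝ^{n₁ × n₂ × n₃ × ⋯ × n_p}` is a function
`A : TI m → Matrix (Fin n₁) (Fin n₂) ℝ`, where `TI m = ∀ k : Fin q, Fin (m k)`
is the trailing multi-index `(i₃, …, i_p)` and `A i` is the frontal slice
`A(:,:,i₃,…,i_p)`.
-/

namespace TSVDM

variable {q : ℕ} {m : Fin q → ℕ}

/-- Trailing multi-index `(i₃, …, i_p)`. -/
abbrev TI (m : Fin q → ℕ) : Type := ∀ k, Fin (m k)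

/-- Transform-domain tensor `Â = A ×₃ M₃ ×₄ M₄ ⋯ ×_p M_p`
(mode-`k` products along all trailing modes). -/
noncomputable def hat (M : ∀ k, Matrix (Fin (m k)) (Fin (m k)) ℝ) {a b : Type}
    (A : TI m → Matrix a b ℝ) : TI m → Matrix a b ℝ :=
  fun i => ∑ j : TI m, (∏ k, M k (i k) (j k)) • A j

/-- Inverse transform `×₃ M₃⁻¹ ×₄ M₄⁻¹ ⋯ ×_p M_p⁻¹`. -/
noncomputable def unhat (M : ∀ k, Matrix (Fin (m k)) (Fin (m k)) ℝ) {a b : Type}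
    (A : TI m → Matrix a b ℝ) : TI m → Matrix a b ℝ :=
  fun i => ∑ j : TI m, (∏ k, (M k)⁻¹ (i k) (j k)) • A j

/-- The `⋆M`-product: `A ⋆M B = (Â △ B̂) ×₃ M₃⁻¹ ⋯ ×_p M_p⁻¹`, where `△` is the
facewise product (slice-wise matrix multiplication). -/
noncomputable def starM (M : ∀ k, Matrix (Fin (m k)) (Fin (m k)) ℝ)
    {a b c : Type} [Fintype b]
    (A : TI m → Matrix a b ℝ) (B : TI m → Matrix b c ℝ) : TI m → Matrix a c ℝ :=
  unhat M (fun i => hat M A i * hat M B i)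

/-- The `⋆M`-transpose: transpose every transform-domain frontal slice. -/
noncomputable def transM (M : ∀ k, Matrix (Fin (m k)) (Fin (m k)) ℝ) {a b : Type}
    (A : TI m → Matrix a b ℝ) : TI m → Matrix b a ℝ :=
  unhat M (fun i => (hat M A i)ᵀ)

/-- The `⋆M`-identity: all transform-domain frontal slices equal the identity matrix. -/
noncomputable def idM (M : ∀ k, Matrix (Fin (m k)) (Fin (m k)) ℝ)
    (a : Type) [DecidableEq a] : TI m → Matrix a a ℝ :=
  unhat M (fun _ => (1 : Matrix a a ℝ))

/-- `Q` is `⋆M`-orthogonal if `Qᵀ ⋆M Q = Q ⋆M Qᵀ = I`. -/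
def IsStarMOrthogonal (M : ∀ k, Matrix (Fin (m k)) (Fin (m k)) ℝ)
    {a : Type} [Fintype a] [DecidableEq a] (Q : TI m → Matrix a a ℝ) : Prop :=
  starM M (transM M Q) Q = idM M a ∧ starM M Q (transM M Q) = idM M a

/-- Frobenius norm of a tensor. -/
noncomputable def frob {a b : Type} [Fintype a] [Fintype b]
    (A : TI m → Matrix a b ℝ) : ℝ :=
  Real.sqrt (∑ i : TI m, ∑ r : a, ∑ c : b, A i r c ^ 2)

/-- Diagonal position `(j, j)`: row index. -/
def dIdx₁ {n₁ n₂ : ℕ} (j : Fin (min n₁ n₂)) : Fin n₁ :=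
  ⟨j.1, lt_of_lt_of_le j.2 (Nat.min_le_left n₁ n₂)⟩

/-- Diagonal position `(j, j)`: column index. -/
def dIdx₂ {n₁ n₂ : ℕ} (j : Fin (min n₁ n₂)) : Fin n₂ :=
  ⟨j.1, lt_of_lt_of_le j.2 (Nat.min_le_right n₁ n₂)⟩

/-- `A = U ⋆M S ⋆M Vᵀ` is a t-SVDM of `A`: `U`, `V` are `⋆M`-orthogonal, `S` is
f-diagonal (each transform-domain frontal slice is diagonal), and the diagonal
entries of each frontal slice of `Ŝ` are nonnegative and in descending order. -/
structure IsTSVDM (M : ∀ k, Matrix (Fin (m k)) (Fin (m k)) ℝ) {n₁ n₂ : ℕ}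
    (A : TI m → Matrix (Fin n₁) (Fin n₂) ℝ)
    (U : TI m → Matrix (Fin n₁) (Fin n₁) ℝ)
    (S : TI m → Matrix (Fin n₁) (Fin n₂) ℝ)
    (V : TI m → Matrix (Fin n₂) (Fin n₂) ℝ) : Prop where
  decomp : A = starM M (starM M U S) (transM M V)
  orthU : IsStarMOrthogonal M U
  orthV : IsStarMOrthogonal M V
  fdiag : ∀ (i : TI m) (a : Fin n₁) (b : Fin n₂), (a : ℕ) ≠ (b : ℕ) → hat M S i a b = 0
  nonneg : ∀ (i : TI m) (j : Fin (min n₁ n₂)), 0 ≤ hat M S i (dIdx₁ j) (dIdx₂ j)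
  descend : ∀ (i : TI m) (j j' : Fin (min n₁ n₂)), j ≤ j' →
    hat M S i (dIdx₁ j') (dIdx₂ j') ≤ hat M S i (dIdx₁ j) (dIdx₂ j)

/-- The `(j,j)`-singular tube of `S`, as a function of the trailing multi-index. -/
def tube {n₁ n₂ : ℕ} (S : TI m → Matrix (Fin n₁) (Fin n₂) ℝ)
    (j : Fin (min n₁ n₂)) : TI m → ℝ :=
  fun i => S i (dIdx₁ j) (dIdx₂ j)

/-- Frobenius norm of the `(j,j)`-singular tube of `S`. -/
noncomputable def tubeNorm {n₁ n₂ : ℕ} (S : TI m → Matrix (Fin n₁) (Fin n₂) ℝ)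
    (j : Fin (min n₁ n₂)) : ℝ :=
  Real.sqrt (∑ i : TI m, tube S j i ^ 2)

/-- `r` is the t-rank: the number of nonzero singular tubes (tubes `s₁,…,s_r`
are nonzero and the remaining ones vanish). -/
def HasTRank {n₁ n₂ : ℕ} (S : TI m → Matrix (Fin n₁) (Fin n₂) ℝ) (r : ℕ) : Prop :=
  ∀ j : Fin (min n₁ n₂), ((j : ℕ) < r ↔ tube S j ≠ 0)

/-- Keep only the first `k` lateral slices (columns of each frontal slice). -/
def truncCols {n k : ℕ} (hk : k ≤ n) {a : Type}
    (U : TI m → Matrix a (Fin n) ℝ) : TI m → Matrix a (Fin k) ℝ :=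
  fun i => Matrix.of fun r c => U i r (Fin.castLE hk c)

/-- Keep only the leading `k × k` block of each frontal slice. -/
def truncBlock {n₁ n₂ k : ℕ} (h₁ : k ≤ n₁) (h₂ : k ≤ n₂)
    (S : TI m → Matrix (Fin n₁) (Fin n₂) ℝ) : TI m → Matrix (Fin k) (Fin k) ℝ :=
  fun i => Matrix.of fun a b => S i (Fin.castLE h₁ a) (Fin.castLE h₂ b)

/-- The t-rank-`k` truncation `A_k = U_k ⋆M S_k ⋆M V_kᵀ`. -/
noncomputable def truncApprox (M : ∀ k, Matrix (Fin (m k)) (Fin (m k)) ℝ)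
    {n₁ n₂ : ℕ} (U : TI m → Matrix (Fin n₁) (Fin n₁) ℝ)
    (S : TI m → Matrix (Fin n₁) (Fin n₂) ℝ)
    (V : TI m → Matrix (Fin n₂) (Fin n₂) ℝ) (k : ℕ) (hk : k ≤ min n₁ n₂) :
    TI m → Matrix (Fin n₁) (Fin n₂) ℝ :=
  starM M
    (starM M (truncCols (le_trans hk (Nat.min_le_left _ _)) U)
      (truncBlock (le_trans hk (Nat.min_le_left _ _)) (le_trans hk (Nat.min_le_right _ _)) S))
    (transM M (truncCols (le_trans hk (Nat.min_le_right _ _)) V))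

/-- The `j`-th lateral slice `A(:,j,:,…,:)`, as an `n₁ × 1 × n₃ × ⋯ × n_p` tensor. -/
def lateral {n₁ n₂ : ℕ} (A : TI m → Matrix (Fin n₁) (Fin n₂) ℝ) (j : Fin n₂) :
    TI m → Matrix (Fin n₁) (Fin 1) ℝ :=
  fun i => Matrix.of fun r _ => A i r j

/-- The `(j,j)`-singular tube of `S` regarded as a `1 × 1 × n₃ × ⋯ × n_p` tensor. -/
def tubeT {n₁ n₂ : ℕ} (S : TI m → Matrix (Fin n₁) (Fin n₂) ℝ)
    (j : Fin (min n₁ n₂)) : TI m → Matrix (Fin 1) (Fin 1) ℝ :=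
  fun i => Matrix.of fun _ _ => S i (dIdx₁ j) (dIdx₂ j)


/-- Frobenius norm of a matrix. -/
noncomputable def mFrob {a b : Type} [Fintype a] [Fintype b] (X : Matrix a b ℝ) : ℝ :=
  Real.sqrt (∑ i : a, ∑ j : b, X i j ^ 2)



section Helpers

lemma hat_entry (M : ∀ k, Matrix (Fin (m k)) (Fin (m k)) ℝ) {a b : Type}
    (A : TI m → Matrix a b ℝ) (i : TI m) (r : a) (c : b) :
    hat M A i r c = ∑ j : TI m, (∏ k, M k (i k) (j k)) * A j r c := by
  simp [hat, Matrix.sum_apply]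

lemma kernel_comp {a b : Type} (P Q : ∀ k, Matrix (Fin (m k)) (Fin (m k)) ℝ)
    (h : ∀ k, P k * Q k = 1) (A : TI m → Matrix a b ℝ) (i : TI m) :
    ∑ j : TI m, (∏ k, P k (i k) (j k)) • (∑ l : TI m, (∏ k, Q k (j k) (l k)) • A l) = A i := by
  classical
  have key : ∀ l : TI m, (∑ j : TI m, (∏ k, P k (i k) (j k)) * (∏ k, Q k (j k) (l k)))
      = if i = l then 1 else 0 := by
    intro l
    have : ∀ j : TI m, (∏ k, P k (i k) (j k)) * (∏ k, Q k (j k) (l k))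
        = ∏ k, (P k (i k) (j k) * Q k (j k) (l k)) := by
      intro j; rw [Finset.prod_mul_distrib]
    simp_rw [this]
    rw [← Fintype.prod_sum fun k x => P k (i k) x * Q k x (l k)]
    have : ∀ k, (∑ x, P k (i k) x * Q k x (l k)) = (1 : Matrix _ _ ℝ) (i k) (l k) := by
      intro k; rw [← h k]; simp [Matrix.mul_apply]
    simp_rw [this]
    by_cases hil : i = l
    · subst hil; simp [Matrix.one_apply]
    · obtain ⟨k, hk⟩ := Function.ne_iff.mp hil
      rw [if_neg hil]
      exact Finset.prod_eq_zero (Finset.mem_univ k) (by simp [Matrix.one_apply, hk])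
  calc ∑ j : TI m, (∏ k, P k (i k) (j k)) • (∑ l : TI m, (∏ k, Q k (j k) (l k)) • A l)
      = ∑ l : TI m, (∑ j : TI m, (∏ k, P k (i k) (j k)) * (∏ k, Q k (j k) (l k))) • A l := by
        simp_rw [Finset.smul_sum, smul_smul]
        rw [Finset.sum_comm]
        simp_rw [Finset.sum_smul]
    _ = A i := by simp_rw [key]; simp

lemma unhat_hat (M : ∀ k, Matrix (Fin (m k)) (Fin (m k)) ℝ)
    (hM : ∀ k, (M k)⁻¹ * M k = 1) {a b : Type} (A : TI m → Matrix a b ℝ) :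
    unhat M (hat M A) = A := by
  funext i; exact kernel_comp (fun k => (M k)⁻¹) M hM A i

lemma hat_unhat (M : ∀ k, Matrix (Fin (m k)) (Fin (m k)) ℝ)
    (hM : ∀ k, M k * (M k)⁻¹ = 1) {a b : Type} (A : TI m → Matrix a b ℝ) :
    hat M (unhat M A) = A := by
  funext i; exact kernel_comp M (fun k => (M k)⁻¹) hM A i


-- new content
lemma hat_starM (M : ∀ k, Matrix (Fin (m k)) (Fin (m k)) ℝ)
    (hM : ∀ k, M k * (M k)⁻¹ = 1) {a b c : Type} [Fintype b]
    (A : TI m → Matrix a b ℝ) (B : TI m → Matrix b c ℝ) (i : TI m) :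
    hat M (starM M A B) i = hat M A i * hat M B i := by
  unfold starM; rw [hat_unhat M hM]

lemma hat_transM (M : ∀ k, Matrix (Fin (m k)) (Fin (m k)) ℝ)
    (hM : ∀ k, M k * (M k)⁻¹ = 1) {a b : Type}
    (A : TI m → Matrix a b ℝ) (i : TI m) :
    hat M (transM M A) i = (hat M A i)ᵀ := by
  unfold transM; rw [hat_unhat M hM]

lemma hat_idM (M : ∀ k, Matrix (Fin (m k)) (Fin (m k)) ℝ)
    (hM : ∀ k, M k * (M k)⁻¹ = 1) {a : Type} [DecidableEq a] (i : TI m) :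
    hat M (idM M a) i = 1 := by
  unfold idM; rw [hat_unhat M hM]

lemma hat_sub (M : ∀ k, Matrix (Fin (m k)) (Fin (m k)) ℝ) {a b : Type}
    (A B : TI m → Matrix a b ℝ) (i : TI m) :
    hat M (A - B) i = hat M A i - hat M B i := by
  unfold hat
  rw [← Finset.sum_sub_distrib]
  exact Finset.sum_congr rfl fun j _ => by rw [Pi.sub_apply, smul_sub]

/-- Parseval: scaled-orthogonal transform scales the sum of squares by `w = ∏ (c k)^2`. -/
lemma hat_sumSq (M : ∀ k, Matrix (Fin (m k)) (Fin (m k)) ℝ)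
    (c : Fin q → ℝ)
    (hMtM : ∀ k, (M k)ᵀ * M k = (c k)^2 • 1) {a b : Type} [Fintype a] [Fintype b]
    (A : TI m → Matrix a b ℝ) :
    ∑ i : TI m, ∑ r : a, ∑ cc : b, (hat M A i r cc)^2
      = (∏ k, (c k)^2) * ∑ i : TI m, ∑ r : a, ∑ cc : b, (A i r cc)^2 := by
  classical
  have key : ∀ (j j' : TI m),
      (∑ i : TI m, (∏ k, M k (i k) (j k)) * (∏ k, M k (i k) (j' k)))
        = if j = j' then (∏ k, (c k)^2) else 0 := by
    intro j j'
    have h1 : ∀ i : TI m, (∏ k, M k (i k) (j k)) * (∏ k, M k (i k) (j' k))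
        = ∏ k, (M k (i k) (j k) * M k (i k) (j' k)) := fun i => by
      rw [Finset.prod_mul_distrib]
    simp_rw [h1]
    rw [← Fintype.prod_sum fun k x => M k x (j k) * M k x (j' k)]
    have h2 : ∀ k, (∑ x, M k x (j k) * M k x (j' k))
        = ((c k)^2 • (1 : Matrix (Fin (m k)) (Fin (m k)) ℝ)) (j k) (j' k) := by
      intro k; rw [← hMtM k]; simp [Matrix.mul_apply]
    simp_rw [h2]
    by_cases hjj : j = j'
    · subst hjj; simp [Matrix.one_apply]
    · obtain ⟨k, hk⟩ := Function.ne_iff.mp hjj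
      rw [if_neg hjj]
      exact Finset.prod_eq_zero (Finset.mem_univ k)
        (by simp [Matrix.smul_apply, Matrix.one_apply, hk])
  have entry : ∀ i r cc, hat M A i r cc = ∑ j : TI m, (∏ k, M k (i k) (j k)) * A j r cc := by
    intro i r cc; simp [hat, Matrix.sum_apply]
  calc ∑ i : TI m, ∑ r : a, ∑ cc : b, (hat M A i r cc)^2
      = ∑ r : a, ∑ cc : b, ∑ i : TI m, (hat M A i r cc)^2 := by
        rw [Finset.sum_comm]; exact Finset.sum_congr rfl fun r _ => Finset.sum_comm
    _ = ∑ r : a, ∑ cc : b, (∏ k, (c k)^2) * ∑ i : TI m, (A i r cc)^2 := by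
        refine Finset.sum_congr rfl fun r _ => Finset.sum_congr rfl fun cc _ => ?_
        simp_rw [entry, sq, Finset.sum_mul_sum]
        rw [Finset.sum_comm]
        have : ∀ j : TI m, ∑ j' : TI m, ∑ i : TI m,
            ((∏ k, M k (i k) (j k)) * A j r cc) * ((∏ k, M k (i k) (j' k)) * A j' r cc)
            = (∏ k, (c k)^2) * (A j r cc * A j r cc) := by
          intro j
          have : ∀ j' : TI m, ∑ i : TI m,
              ((∏ k, M k (i k) (j k)) * A j r cc) * ((∏ k, M k (i k) (j' k)) * A j' r cc)
              = (if j = j' then (∏ k, (c k)^2) else 0) * (A j r cc * A j' r cc) := by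
            intro j'
            rw [← key j j', Finset.sum_mul]
            exact Finset.sum_congr rfl fun i _ => by ring
          simp_rw [this]
          rw [Finset.sum_eq_single j]
          · simp
          · intro j' _ hne
            rw [if_neg (fun h => hne h.symm), zero_mul]
          · intro h; exact absurd (Finset.mem_univ j) h
        have h4 : ∀ jj : TI m, (∑ i : TI m, ∑ j' : TI m,
            ((∏ k, M k (i k) (jj k)) * A jj r cc) * ((∏ k, M k (i k) (j' k)) * A j' r cc))
            = ∑ j' : TI m, ∑ i : TI m,
            ((∏ k, M k (i k) (jj k)) * A jj r cc) * ((∏ k, M k (i k) (j' k)) * A j' r cc) :=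
          fun jj => Finset.sum_comm
        simp_rw [h4, this]
        rw [Finset.mul_sum]
        have hw : (∏ x, (c x)^2) = ∏ x, c x * c x :=
          Finset.prod_congr rfl fun k _ => pow_two (c k)
        exact Finset.sum_congr rfl fun _ _ => by rw [hw]; try ring
    _ = (∏ k, (c k)^2) * ∑ i : TI m, ∑ r : a, ∑ cc : b, (A i r cc)^2 := by
        simp_rw [Finset.mul_sum]
        have h3 : ∀ r : a, ∑ cc : b, ∑ i : TI m, (∏ k, (c k)^2) * (A i r cc)^2
            = ∑ i : TI m, ∑ cc : b, (∏ k, (c k)^2) * (A i r cc)^2 := fun r => Finset.sum_comm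
        simp_rw [h3]
        exact Finset.sum_comm

noncomputable def sumSq {a b : Type} [Fintype a] [Fintype b] (X : Matrix a b ℝ) : ℝ :=
  ∑ r : a, ∑ c : b, X r c ^ 2

lemma sumSq_eq_trace {a b : Type} [Fintype a] [Fintype b] (X : Matrix a b ℝ) :
    sumSq X = Matrix.trace (Xᵀ * X) := by
  unfold sumSq Matrix.trace
  rw [Finset.sum_comm]
  refine Finset.sum_congr rfl fun c _ => ?_
  simp [Matrix.mul_apply, Matrix.diag, sq]

lemma sumSq_nonneg {a b : Type} [Fintype a] [Fintype b] (X : Matrix a b ℝ) :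
    0 ≤ sumSq X :=
  Finset.sum_nonneg fun _ _ => Finset.sum_nonneg fun _ _ => sq_nonneg _

/-- Frobenius invariance under orthogonal conjugation. -/
lemma sumSq_conj {n₁ n₂ : ℕ} (U : Matrix (Fin n₁) (Fin n₁) ℝ)
    (V : Matrix (Fin n₂) (Fin n₂) ℝ) (Z : Matrix (Fin n₁) (Fin n₂) ℝ)
    (hU : U * Uᵀ = 1) (hV : Vᵀ * V = 1) :
    sumSq (Uᵀ * Z * V) = sumSq Z := by
  rw [sumSq_eq_trace, sumSq_eq_trace]
  have hV' : V * Vᵀ = 1 := mul_eq_one_comm.mp hV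
  have key : (Uᵀ * Z * V)ᵀ * (Uᵀ * Z * V) = Vᵀ * (Zᵀ * (Z * V)) := by
    simp only [Matrix.transpose_mul, Matrix.transpose_transpose, Matrix.mul_assoc]
    rw [show U * (Uᵀ * (Z * V)) = Z * V by rw [← Matrix.mul_assoc, hU, Matrix.one_mul]]
  rw [key, Matrix.trace_mul_comm, ← Matrix.mul_assoc]
  rw [show Zᵀ * Z * V * Vᵀ = Zᵀ * Z * (V * Vᵀ) from Matrix.mul_assoc _ _ _, hV',
    Matrix.mul_one]

/-- Pythagoras along a symmetric idempotent `Π`. -/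
lemma sumSq_proj_split {n₁ n₂ : ℕ} (Z : Matrix (Fin n₁) (Fin n₂) ℝ)
    (P : Matrix (Fin n₂) (Fin n₂) ℝ) (hPt : Pᵀ = P) (hPP : P * P = P) :
    sumSq Z = sumSq (Z * P) + sumSq (Z - Z * P) := by
  rw [sumSq_eq_trace, sumSq_eq_trace, sumSq_eq_trace]
  have h1 : (Z * P)ᵀ * (Z * P) = P * (Zᵀ * Z) * P := by
    rw [Matrix.transpose_mul, hPt]; simp only [Matrix.mul_assoc]
  have htr1 : Matrix.trace (P * (Zᵀ * Z) * P) = Matrix.trace (Zᵀ * Z * P) := by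
    rw [Matrix.trace_mul_comm, ← Matrix.mul_assoc, hPP, Matrix.trace_mul_comm]
  have h2 : (Z - Z * P)ᵀ * (Z - Z * P)
      = Zᵀ * Z - (Z * P)ᵀ * Z - Zᵀ * (Z * P) + (Z * P)ᵀ * (Z * P) := by
    rw [Matrix.transpose_sub, Matrix.sub_mul, Matrix.mul_sub, Matrix.mul_sub]; abel
  have htr2 : Matrix.trace ((Z * P)ᵀ * Z) = Matrix.trace (Zᵀ * Z * P) := by
    rw [Matrix.transpose_mul, hPt, Matrix.mul_assoc, Matrix.trace_mul_comm]
  have htr3 : Matrix.trace (Zᵀ * (Z * P)) = Matrix.trace (Zᵀ * Z * P) := by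
    rw [Matrix.mul_assoc]
  rw [h1, h2]
  simp only [Matrix.trace_add, Matrix.trace_sub, htr1, htr2, htr3, h1]
  ring

/-- Sum over `Fin k` of `f ∘ castLE` as a restricted sum over `Fin n`. -/
lemma castLE_sum {n k : ℕ} (h : k ≤ n) (f : Fin n → ℝ) :
    ∑ a : Fin k, f (Fin.castLE h a) = ∑ a : Fin n, if (a : ℕ) < k then f a else 0 := by
  classical
  rw [← Finset.sum_filter]
  have himg : Finset.univ.filter (fun a : Fin n => (a : ℕ) < k)
      = Finset.univ.image (Fin.castLE h) := by
    ext a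
    simp only [Finset.mem_filter, Finset.mem_univ, true_and, Finset.mem_image]
    constructor
    · intro ha; exact ⟨⟨a.1, ha⟩, rfl⟩
    · rintro ⟨b, rfl⟩; exact b.2
  rw [himg, Finset.sum_image (fun x _ y _ hxy => Fin.castLE_injective h hxy)]

/-- Sum of a "diagonal-supported" function over a rectangle. -/
lemma diag_pair_sum {n₁ n₂ : ℕ} (F : Fin n₁ → Fin n₂ → ℝ)
    (hF : ∀ (a : Fin n₁) (b : Fin n₂), (a : ℕ) ≠ (b : ℕ) → F a b = 0) :
    ∑ a : Fin n₁, ∑ b : Fin n₂, F a b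
      = ∑ j : Fin (min n₁ n₂), F (dIdx₁ j) (dIdx₂ j) := by
  classical
  rw [← Finset.sum_product']
  have hinj : Function.Injective
      (fun j : Fin (min n₁ n₂) => ((dIdx₁ j, dIdx₂ j) : Fin n₁ × Fin n₂)) := by
    intro x y hxy
    have : (x : ℕ) = (y : ℕ) := congrArg (fun p => (p.1 : ℕ)) hxy
    exact Fin.ext this
  have himg : ∑ j : Fin (min n₁ n₂), F (dIdx₁ j) (dIdx₂ j)
      = ∑ p ∈ Finset.univ.image
          (fun j : Fin (min n₁ n₂) => ((dIdx₁ j, dIdx₂ j) : Fin n₁ × Fin n₂)),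
          F p.1 p.2 := by
    rw [Finset.sum_image (fun x _ y _ hxy => hinj hxy)]
  rw [himg]
  symm
  apply Finset.sum_subset (Finset.subset_univ _)
  intro p _ hp
  by_cases hd : (p.1 : ℕ) = (p.2 : ℕ)
  · exfalso
    apply hp
    have hlt : (p.1 : ℕ) < min n₁ n₂ := lt_min (p.1.2) (hd ▸ p.2.2)
    refine Finset.mem_image.mpr ⟨⟨p.1.1, hlt⟩, Finset.mem_univ _, ?_⟩
    exact Prod.ext (Fin.ext rfl) (Fin.ext hd)
  · exact hF p.1 p.2 hd


lemma sumSq_mul_proj {n₁ n₂ : ℕ} (X : Matrix (Fin n₁) (Fin n₂) ℝ)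
    (G : Matrix (Fin n₂) (Fin n₂) ℝ) (hGt : Gᵀ = G) (hGG : G * G = G) :
    sumSq (X * G) = Matrix.trace (Xᵀ * X * G) := by
  rw [sumSq_eq_trace, Matrix.transpose_mul, hGt]
  have h : G * Xᵀ * (X * G) = G * (Xᵀ * X * G) := by
    rw [Matrix.mul_assoc, ← Matrix.mul_assoc Xᵀ X G]
  rw [h, Matrix.trace_mul_comm, Matrix.mul_assoc (Xᵀ * X) G G, hGG]

lemma tail_ineq {nmin k : ℕ} (σ t : Fin nmin → ℝ) (hnn : ∀ j, 0 ≤ σ j)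
    (hdesc : ∀ j j' : Fin nmin, j ≤ j' → σ j' ≤ σ j)
    (ht0 : ∀ j, 0 ≤ t j) (ht1 : ∀ j, t j ≤ 1) (htsum : ∑ j, t j ≤ (k : ℝ)) :
    (∑ j : Fin nmin, if k ≤ (j : ℕ) then (σ j)^2 else 0)
      ≤ ∑ j : Fin nmin, (σ j)^2 * (1 - t j) := by
  by_cases hk : k < nmin
  · set s := σ ⟨k, hk⟩ with hs
    have hterm : ∀ j : Fin nmin,
        (if k ≤ (j : ℕ) then (σ j)^2 else 0)
          + s^2 * ((if (j : ℕ) < k then (1:ℝ) else 0) - t j) ≤ (σ j)^2 * (1 - t j) := by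
      intro j
      by_cases hj : (j : ℕ) < k
      · rw [if_neg (not_le.mpr hj), if_pos hj]
        have hsj : s ≤ σ j := hdesc j ⟨k, hk⟩ (le_of_lt hj)
        have hs0 : 0 ≤ s := hnn _
        have hs2 : s^2 ≤ (σ j)^2 := pow_le_pow_left₀ hs0 hsj 2
        nlinarith [ht1 j]
      · rw [if_pos (not_lt.mp hj), if_neg hj]
        have hsj : σ j ≤ s := hdesc ⟨k, hk⟩ j (not_lt.mp hj)
        have hs2 : (σ j)^2 ≤ s^2 := pow_le_pow_left₀ (hnn j) hsj 2
        nlinarith [ht0 j]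
    have h1 : (∑ j : Fin nmin, if k ≤ (j : ℕ) then (σ j)^2 else 0)
        ≤ ∑ j : Fin nmin, ((if k ≤ (j : ℕ) then (σ j)^2 else 0)
            + s^2 * ((if (j : ℕ) < k then (1:ℝ) else 0) - t j)) := by
      rw [Finset.sum_add_distrib]
      have hone : (∑ j : Fin nmin, (if (j : ℕ) < k then (1:ℝ) else 0)) = k := by
        rw [← castLE_sum (le_of_lt hk) (fun _ => (1:ℝ))]; simp
      have h2 : ∑ j : Fin nmin, s^2 * ((if (j : ℕ) < k then (1:ℝ) else 0) - t j)
          = s^2 * ((k : ℝ) - ∑ j, t j) := by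
        rw [← Finset.mul_sum]
        congr 1
        rw [Finset.sum_sub_distrib, hone]
      rw [h2]
      nlinarith [sq_nonneg s]
    exact le_trans h1 (Finset.sum_le_sum fun j _ => hterm j)
  · have hnone : ∀ j : Fin nmin, ¬ (k ≤ (j : ℕ)) := fun j hle =>
      hk (lt_of_le_of_lt hle j.2)
    calc (∑ j : Fin nmin, if k ≤ (j : ℕ) then (σ j)^2 else 0) = 0 := by
          simp [hnone]
      _ ≤ ∑ j : Fin nmin, (σ j)^2 * (1 - t j) :=
          Finset.sum_nonneg fun j _ => mul_nonneg (sq_nonneg _) (by nlinarith [ht1 j])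


noncomputable def Qm {n₂ : ℕ} (R' : Submodule ℝ (EuclideanSpace ℝ (Fin n₂))) :
    Matrix (Fin (Module.finrank ℝ R')) (Fin n₂) ℝ :=
  Matrix.of fun l b => (stdOrthonormalBasis ℝ R' l : EuclideanSpace ℝ (Fin n₂)) b

lemma Qm_mul_Qmt {n₂ : ℕ} (R' : Submodule ℝ (EuclideanSpace ℝ (Fin n₂))) :
    Qm R' * (Qm R')ᵀ = 1 := by
  ext l l'
  rw [Matrix.mul_apply]
  simp only [Matrix.transpose_apply, Qm, Matrix.of_apply]
  have h := orthonormal_iff_ite.mp (stdOrthonormalBasis ℝ R').orthonormal l l'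
  rw [Submodule.coe_inner, PiLp.inner_apply] at h
  simp only [RCLike.inner_apply, conj_trivial] at h
  exact ((Finset.sum_congr rfl fun j _ => mul_comm _ _).trans h).trans Matrix.one_apply.symm

lemma Qm_proj_vec {n₂ : ℕ} (R' : Submodule ℝ (EuclideanSpace ℝ (Fin n₂)))
    (y : EuclideanSpace ℝ (Fin n₂)) (hy : y ∈ R') (c : Fin n₂) :
    ∑ b, y b * ((Qm R')ᵀ * Qm R') b c = y c := by
  classical
  set o := stdOrthonormalBasis ℝ R' with ho
  set x : R' := ⟨y, hy⟩ with hx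
  have hrep := o.sum_repr' x
  have hrepc : (∑ l, (inner (𝕜 := ℝ) (o l) x : ℝ) * Qm R' l c) = y c := by
    have := congrArg (fun z : R' => (z : EuclideanSpace ℝ (Fin n₂)) c) hrep
    simp only [AddSubmonoidClass.coe_finset_sum, SetLike.val_smul] at this
    rw [← this]
    rw [WithLp.ofLp_sum, Finset.sum_apply]
    refine Finset.sum_congr rfl fun l _ => ?_
    simp [Qm, smul_eq_mul, ho]
  calc ∑ b, y b * ((Qm R')ᵀ * Qm R') b c
      = ∑ b, ∑ l, y b * (Qm R' l b * Qm R' l c) := by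
        refine Finset.sum_congr rfl fun b _ => ?_
        rw [Matrix.mul_apply, Finset.mul_sum]
        exact Finset.sum_congr rfl fun l _ => by rw [Matrix.transpose_apply]
    _ = ∑ l, (∑ b, y b * Qm R' l b) * Qm R' l c := by
        rw [Finset.sum_comm]
        refine Finset.sum_congr rfl fun l _ => ?_
        rw [Finset.sum_mul]
        exact Finset.sum_congr rfl fun b _ => by ring
    _ = ∑ l, (inner (𝕜 := ℝ) (o l) x : ℝ) * Qm R' l c := by
        refine Finset.sum_congr rfl fun l _ => ?_
        congr 1
    _ = y c := hrepc

/-- Eckart–Young (diagonal case). -/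
lemma eckartYoung_diag {n₁ n₂ k : ℕ} (Sm Y : Matrix (Fin n₁) (Fin n₂) ℝ)
    (hdiag : ∀ (a : Fin n₁) (b : Fin n₂), (a : ℕ) ≠ (b : ℕ) → Sm a b = 0)
    (hnn : ∀ j : Fin (min n₁ n₂), 0 ≤ Sm (dIdx₁ j) (dIdx₂ j))
    (hdesc : ∀ j j' : Fin (min n₁ n₂), j ≤ j' →
      Sm (dIdx₁ j') (dIdx₂ j') ≤ Sm (dIdx₁ j) (dIdx₂ j))
    (R : Submodule ℝ (EuclideanSpace ℝ (Fin n₂))) (hfr : Module.finrank ℝ R ≤ k)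
    (hY : ∀ r, WithLp.toLp 2 (Y r) ∈ R) :
    (∑ j : Fin (min n₁ n₂), if k ≤ (j : ℕ) then (Sm (dIdx₁ j) (dIdx₂ j))^2 else 0)
      ≤ sumSq (Sm - Y) := by
  classical
  set Q := Qm R with hQ
  set P : Matrix (Fin n₂) (Fin n₂) ℝ := Qᵀ * Q with hP
  have hQQt : Q * Qᵀ = 1 := Qm_mul_Qmt R
  have hPt : Pᵀ = P := by rw [hP, Matrix.transpose_mul, Matrix.transpose_transpose]
  have hPP : P * P = P := by
    rw [hP, Matrix.mul_assoc, ← Matrix.mul_assoc Q Qᵀ Q, hQQt, Matrix.one_mul]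
  have hYP : Y * P = Y := by
    ext r c
    rw [Matrix.mul_apply]
    exact Qm_proj_vec R (WithLp.toLp 2 (Y r)) (hY r) c
  -- Pythagoras
  have hsplit := sumSq_proj_split (Sm - Y) P hPt hPP
  have hrem : Sm - Y - (Sm - Y) * P = Sm - Sm * P := by
    rw [Matrix.sub_mul, hYP]
    abel
  have hge : sumSq (Sm - Sm * P) ≤ sumSq (Sm - Y) := by
    rw [hsplit, hrem]
    have := sumSq_nonneg ((Sm - Y) * P)
    linarith
  refine le_trans ?_ hge
  -- compute sumSq (Sm - Sm * P)
  set G : Matrix (Fin n₂) (Fin n₂) ℝ := 1 - P with hG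
  have hGt : Gᵀ = G := by rw [hG, Matrix.transpose_sub, Matrix.transpose_one, hPt]
  have hGG : G * G = G := by
    rw [hG, Matrix.sub_mul, Matrix.mul_sub, Matrix.mul_sub, hPP]
    simp only [Matrix.one_mul, Matrix.mul_one]
    abel
  have hSmG : Sm - Sm * P = Sm * G := by rw [hG, Matrix.mul_sub, Matrix.mul_one]
  rw [hSmG, sumSq_mul_proj Sm G hGt hGG]
  -- trace (SmᵀSm G) = ∑_j σ_j^2 * G_jj
  have hSS0 : ∀ (b c : Fin n₂), (b : ℕ) ≠ (c : ℕ) → (Smᵀ * Sm) b c = 0 := by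
    intro b c hbc
    rw [Matrix.mul_apply]
    refine Finset.sum_eq_zero fun a _ => ?_
    by_cases hab : (a : ℕ) = (b : ℕ)
    · rw [Matrix.transpose_apply, hdiag a c (hab ▸ hbc), mul_zero]
    · rw [Matrix.transpose_apply, hdiag a b hab, zero_mul]
  have htr : Matrix.trace (Smᵀ * Sm * G) = ∑ b : Fin n₂, (Smᵀ * Sm) b b * G b b := by
    unfold Matrix.trace
    refine Finset.sum_congr rfl fun b _ => ?_
    rw [Matrix.diag_apply, Matrix.mul_apply]
    rw [Finset.sum_eq_single b]
    · intro c _ hcb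
      rw [hSS0 b c (fun h => hcb (Fin.ext h.symm)), zero_mul]
    · intro h; exact absurd (Finset.mem_univ b) h
  rw [htr]
  -- restrict to Fin (min n₁ n₂)
  have hzero : ∀ b : Fin n₂, ¬ ((b : ℕ) < min n₁ n₂) → (Smᵀ * Sm) b b * G b b = 0 := by
    intro b hb
    have hbn : n₁ ≤ (b : ℕ) := by
      by_contra h
      push_neg at h
      exact hb (lt_min h b.2)
    have h0 : (Smᵀ * Sm) b b = 0 := by
      rw [Matrix.mul_apply]
      refine Finset.sum_eq_zero fun a _ => ?_
      rw [Matrix.transpose_apply, hdiag a b (Nat.ne_of_lt (lt_of_lt_of_le a.2 hbn)), zero_mul]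
    rw [h0, zero_mul]
  have hrestrict : ∑ b : Fin n₂, (Smᵀ * Sm) b b * G b b
      = ∑ j : Fin (min n₁ n₂), (Smᵀ * Sm) (dIdx₂ j) (dIdx₂ j) * G (dIdx₂ j) (dIdx₂ j) := by
    show _ = ∑ j : Fin (min n₁ n₂),
      (fun b => (Smᵀ * Sm) b b * G b b) (Fin.castLE (Nat.min_le_right n₁ n₂) j)
    rw [castLE_sum (Nat.min_le_right n₁ n₂) (fun b => (Smᵀ * Sm) b b * G b b)]
    symm
    refine Finset.sum_congr rfl fun b _ => ?_
    by_cases hb : (b : ℕ) < min n₁ n₂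
    · rw [if_pos hb]
    · rw [if_neg hb, hzero b hb]
  rw [hrestrict]
  -- diagonal entries
  have hdiagSS : ∀ j : Fin (min n₁ n₂),
      (Smᵀ * Sm) (dIdx₂ j) (dIdx₂ j) = (Sm (dIdx₁ j) (dIdx₂ j))^2 := by
    intro j
    rw [Matrix.mul_apply]
    rw [Finset.sum_eq_single (dIdx₁ j)]
    · rw [Matrix.transpose_apply, sq]
    · intro a _ ha
      rw [Matrix.transpose_apply, hdiag a (dIdx₂ j) (fun h => ha (Fin.ext h)), zero_mul]
    · intro h; exact absurd (Finset.mem_univ _) h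
  -- t bounds
  set t : Fin n₂ → ℝ := fun b => P b b with htdef
  have ht0 : ∀ b, 0 ≤ t b := by
    intro b
    simp only [htdef, hP, Matrix.mul_apply]
    exact Finset.sum_nonneg fun l _ => by rw [Matrix.transpose_apply]; exact mul_self_nonneg _
  have ht1 : ∀ b, t b ≤ 1 := by
    intro b
    have hsq : t b = ∑ c, (P b c)^2 := by
      rw [show t b = (P * P) b b from by rw [hPP], Matrix.mul_apply]
      refine Finset.sum_congr rfl fun c _ => ?_
      have hcb : P c b = P b c := by
        conv_lhs => rw [← hPt]
        rw [Matrix.transpose_apply]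
      rw [sq, hcb]
    have hge2 : (P b b)^2 ≤ ∑ c, (P b c)^2 :=
      Finset.single_le_sum (f := fun c => (P b c)^2) (fun c _ => sq_nonneg _)
        (Finset.mem_univ b)
    have := ht0 b
    simp only [htdef] at *
    nlinarith
  have htsum : ∑ b : Fin n₂, t b ≤ (k : ℝ) := by
    have h1 : ∑ b : Fin n₂, t b = Matrix.trace P := rfl
    rw [h1, hP, Matrix.trace_mul_comm, hQQt, Matrix.trace_one]
    simp only [Fintype.card_fin]
    exact_mod_cast hfr
  have htsum' : ∑ j : Fin (min n₁ n₂), t (dIdx₂ j) ≤ (k : ℝ) := by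
    refine le_trans ?_ htsum
    show ∑ j : Fin (min n₁ n₂), t (Fin.castLE (Nat.min_le_right n₁ n₂) j) ≤ _
    rw [castLE_sum (Nat.min_le_right n₁ n₂) t]
    refine Finset.sum_le_sum fun b _ => ?_
    by_cases hb : (b : ℕ) < min n₁ n₂
    · rw [if_pos hb]
    · rw [if_neg hb]; exact ht0 b
  have hGbb : ∀ j : Fin (min n₁ n₂), G (dIdx₂ j) (dIdx₂ j) = 1 - t (dIdx₂ j) := by
    intro j
    rw [hG, Matrix.sub_apply, Matrix.one_apply_eq]
  calc (∑ j : Fin (min n₁ n₂), if k ≤ (j : ℕ) then (Sm (dIdx₁ j) (dIdx₂ j))^2 else 0)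
      ≤ ∑ j : Fin (min n₁ n₂), (Sm (dIdx₁ j) (dIdx₂ j))^2 * (1 - t (dIdx₂ j)) :=
        tail_ineq (fun j => Sm (dIdx₁ j) (dIdx₂ j)) (fun j => t (dIdx₂ j))
          hnn hdesc (fun j => ht0 _) (fun j => ht1 _) htsum'
    _ = ∑ j : Fin (min n₁ n₂), (Smᵀ * Sm) (dIdx₂ j) (dIdx₂ j) * G (dIdx₂ j) (dIdx₂ j) := by
        refine Finset.sum_congr rfl fun j _ => ?_
        rw [hdiagSS j, hGbb j]

/-- Eckart–Young, general orthogonally-diagonalized form. -/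
lemma eckartYoung {n₁ n₂ k : ℕ} (U : Matrix (Fin n₁) (Fin n₁) ℝ)
    (Sm : Matrix (Fin n₁) (Fin n₂) ℝ) (V : Matrix (Fin n₂) (Fin n₂) ℝ)
    (Y : Matrix (Fin n₁) (Fin n₂) ℝ)
    (hU : Uᵀ * U = 1) (hU' : U * Uᵀ = 1) (hV : Vᵀ * V = 1) (hV' : V * Vᵀ = 1)
    (hdiag : ∀ (a : Fin n₁) (b : Fin n₂), (a : ℕ) ≠ (b : ℕ) → Sm a b = 0)
    (hnn : ∀ j : Fin (min n₁ n₂), 0 ≤ Sm (dIdx₁ j) (dIdx₂ j))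
    (hdesc : ∀ j j' : Fin (min n₁ n₂), j ≤ j' →
      Sm (dIdx₁ j') (dIdx₂ j') ≤ Sm (dIdx₁ j) (dIdx₂ j))
    (R : Submodule ℝ (EuclideanSpace ℝ (Fin n₂))) (hfr : Module.finrank ℝ R ≤ k)
    (hY : ∀ r, WithLp.toLp 2 (Y r) ∈ R) :
    (∑ j : Fin (min n₁ n₂), if k ≤ (j : ℕ) then (Sm (dIdx₁ j) (dIdx₂ j))^2 else 0)
      ≤ sumSq (U * Sm * Vᵀ - Y) := by
  classical
  have hconj := sumSq_conj U V (U * Sm * Vᵀ - Y) hU' hV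
  have hred : Uᵀ * (U * Sm * Vᵀ - Y) * V = Sm - Uᵀ * Y * V := by
    rw [Matrix.mul_sub, Matrix.sub_mul]
    congr 1
    calc Uᵀ * (U * Sm * Vᵀ) * V = Uᵀ * U * Sm * (Vᵀ * V) := by
          simp only [Matrix.mul_assoc]
      _ = Sm := by rw [hU, hV, Matrix.one_mul, Matrix.mul_one]
  set le2 : EuclideanSpace ℝ (Fin n₂) ≃ₗ[ℝ] (Fin n₂ → ℝ) :=
    WithLp.linearEquiv 2 ℝ (Fin n₂ → ℝ) with hle2
  set fV : EuclideanSpace ℝ (Fin n₂) →ₗ[ℝ] EuclideanSpace ℝ (Fin n₂) :=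
    (le2.symm.toLinearMap.comp (Matrix.vecMulLinear V)).comp le2.toLinearMap with hfV
  set R2 : Submodule ℝ (EuclideanSpace ℝ (Fin n₂)) := R.map fV with hR2
  have hfr2 : Module.finrank ℝ R2 ≤ k :=
    le_trans (Submodule.finrank_map_le _ _) hfr
  have hY2 : ∀ r, WithLp.toLp 2 ((Uᵀ * Y * V) r) ∈ R2 := by
    intro r
    have hmem : WithLp.toLp 2 (∑ p, (Uᵀ r p) • Y p) ∈ R := by
      rw [WithLp.toLp_sum]
      simp_rw [WithLp.toLp_smul]
      exact Submodule.sum_mem R fun p _ => Submodule.smul_mem R _ (hY p)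
    have hrow : WithLp.toLp 2 ((Uᵀ * Y * V) r) = fV (WithLp.toLp 2 (∑ p, (Uᵀ r p) • Y p)) := by
      ext c
      show (Uᵀ * Y * V) r c = Matrix.vecMul (∑ p, (Uᵀ r p) • Y p) V c
      rw [Matrix.mul_apply]
      simp only [Matrix.vecMul, dotProduct, Finset.sum_apply, Pi.smul_apply,
        smul_eq_mul, Matrix.mul_apply, Finset.sum_mul]
    rw [hrow]
    exact Submodule.mem_map_of_mem hmem
  have hEY := eckartYoung_diag Sm (Uᵀ * Y * V) hdiag hnn hdesc R2 hfr2 hY2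
  calc (∑ j : Fin (min n₁ n₂), if k ≤ (j : ℕ) then (Sm (dIdx₁ j) (dIdx₂ j))^2 else 0)
      ≤ sumSq (Sm - Uᵀ * Y * V) := hEY
    _ = sumSq (U * Sm * Vᵀ - Y) := by rw [← hred, hconj]


lemma trunc_expand {n₁ n₂ k : ℕ} (h₁ : k ≤ n₁) (h₂ : k ≤ n₂)
    (X : Matrix (Fin n₁) (Fin n₁) ℝ) (S : Matrix (Fin n₁) (Fin n₂) ℝ)
    (V : Matrix (Fin n₂) (Fin n₂) ℝ) :
    (Matrix.of fun r (a : Fin k) => X r (Fin.castLE h₁ a))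
        * (Matrix.of fun (a b : Fin k) => S (Fin.castLE h₁ a) (Fin.castLE h₂ b))
        * (Matrix.of fun cc (b : Fin k) => V cc (Fin.castLE h₂ b))ᵀ
      = X * (Matrix.of fun (a : Fin n₁) (b : Fin n₂) => if (a : ℕ) < k ∧ (b : ℕ) < k then S a b else 0) * Vᵀ := by
  ext r cc
  rw [Matrix.mul_apply, Matrix.mul_apply]
  have hR : ∀ b' : Fin n₂,
      (X * (Matrix.of fun (a : Fin n₁) (b : Fin n₂) => if (a : ℕ) < k ∧ (b : ℕ) < k then S a b else 0)) r b' * Vᵀ b' cc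
      = if (b' : ℕ) < k then
          (∑ a : Fin k, X r (Fin.castLE h₁ a) * S (Fin.castLE h₁ a) b') * V cc b' else 0 := by
    intro b'
    rw [Matrix.mul_apply, Matrix.transpose_apply]
    by_cases hb : (b' : ℕ) < k
    · rw [if_pos hb]
      congr 1
      rw [castLE_sum h₁ (fun a' => X r a' * S a' b')]
      refine Finset.sum_congr rfl fun a' _ => ?_
      by_cases ha : (a' : ℕ) < k
      · simp [Matrix.of_apply, ha, hb]
      · simp [Matrix.of_apply, ha]
    · rw [if_neg hb]
      have : ∀ a' : Fin n₁, X r a' * (Matrix.of fun (a : Fin n₁) (b : Fin n₂) =>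
          if (a : ℕ) < k ∧ (b : ℕ) < k then S a b else 0) a' b' = 0 := by
        intro a'; simp [Matrix.of_apply, hb]
      rw [Finset.sum_congr rfl fun a' _ => this a']
      simp
  rw [Finset.sum_congr rfl fun b' _ => hR b', ← Finset.sum_filter,
    Finset.sum_filter]
  rw [← castLE_sum h₂ (fun b' => (∑ a : Fin k, X r (Fin.castLE h₁ a) * S (Fin.castLE h₁ a) b') * V cc b')]
  refine Finset.sum_congr rfl fun b _ => ?_
  rw [Matrix.mul_apply]
  simp [Matrix.of_apply, Matrix.transpose_apply]

end Helpers

/-- (Optimality of the t-rank-`k` tensor representation over the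
rank-`k` matrix representation.) If `A_mat` is the matrix whose `j`-th column is the
vectorization of the `j`-th lateral slice of `A` and `B` is a best rank-`k`
approximation of `A_mat` in the Frobenius norm, then `‖A − A_k‖_F ≤ ‖A_mat − B‖_F`. -/
theorem truncApprox_beats_matrix_svd {q : ℕ} {m : Fin q → ℕ}
    (M : ∀ k, Matrix (Fin (m k)) (Fin (m k)) ℝ)
    (c : Fin q → ℝ) (W : ∀ k, Matrix (Fin (m k)) (Fin (m k)) ℝ)
    (hc : ∀ k, c k ≠ 0)
    (hW : ∀ k, W k * (W k)ᵀ = 1 ∧ (W k)ᵀ * W k = 1)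
    (hM : ∀ k, M k = c k • W k)
    {n₁ n₂ : ℕ} (A : TI m → Matrix (Fin n₁) (Fin n₂) ℝ)
    (U : TI m → Matrix (Fin n₁) (Fin n₁) ℝ)
    (S : TI m → Matrix (Fin n₁) (Fin n₂) ℝ)
    (V : TI m → Matrix (Fin n₂) (Fin n₂) ℝ)
    (hSVD : IsTSVDM M A U S V) (k : ℕ) (hk : k ≤ min n₁ n₂)
    (Amat : Matrix (Fin n₁ × TI m) (Fin n₂) ℝ)
    (hAmat : Amat = Matrix.of fun ri j => A ri.2 ri.1 j)
    (B : Matrix (Fin n₁ × TI m) (Fin n₂) ℝ) (hBrank : B.rank ≤ k)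
    (hBopt : ∀ C : Matrix (Fin n₁ × TI m) (Fin n₂) ℝ, C.rank ≤ k →
      mFrob (Amat - B) ≤ mFrob (Amat - C)) :
    frob (A - truncApprox M U S V k hk) ≤ mFrob (Amat - B) := by
  classical
  -- facts about the transform matrices
  have hMtM : ∀ k', (M k')ᵀ * M k' = ((c k')^2) • (1 : Matrix (Fin (m k')) (Fin (m k')) ℝ) := by
    intro k'
    rw [hM k', Matrix.transpose_smul, Matrix.smul_mul, Matrix.mul_smul, (hW k').2,
      smul_smul, sq]
  have hMl : ∀ k', (M k')⁻¹ * M k' = 1 := by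
    intro k'
    have hinv : ((c k')⁻¹ • (W k')ᵀ) * M k' = 1 := by
      rw [hM k', Matrix.smul_mul, Matrix.mul_smul, (hW k').2, smul_smul,
        inv_mul_cancel₀ (hc k'), one_smul]
    rw [Matrix.inv_eq_left_inv hinv]
    exact hinv
  have hMr : ∀ k', M k' * (M k')⁻¹ = 1 := fun k' => mul_eq_one_comm.mp (hMl k')
  have hw : 0 < ∏ k', (c k')^2 :=
    Finset.prod_pos fun k' _ => by have := hc k'; positivity
  -- slice orthogonality in the transform domain
  have hUo : ∀ i, (hat M U i)ᵀ * hat M U i = 1 := by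
    intro i
    have h1 : hat M (starM M (transM M U) U) i = hat M (idM M (Fin n₁)) i := by
      rw [hSVD.orthU.1]
    rwa [hat_starM M hMr, hat_transM M hMr, hat_idM M hMr] at h1
  have hUo' : ∀ i, hat M U i * (hat M U i)ᵀ = 1 :=
    fun i => mul_eq_one_comm.mp (hUo i)
  have hVo : ∀ i, (hat M V i)ᵀ * hat M V i = 1 := by
    intro i
    have h1 : hat M (starM M (transM M V) V) i = hat M (idM M (Fin n₂)) i := by
      rw [hSVD.orthV.1]
    rwa [hat_starM M hMr, hat_transM M hMr, hat_idM M hMr] at h1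
  have hVo' : ∀ i, hat M V i * (hat M V i)ᵀ = 1 :=
    fun i => mul_eq_one_comm.mp (hVo i)
  -- hat of A
  have hA : ∀ i, hat M A i = hat M U i * hat M S i * (hat M V i)ᵀ := by
    intro i
    rw [hSVD.decomp, hat_starM M hMr, hat_starM M hMr, hat_transM M hMr]
  -- hat of the truncation
  have h₁ : k ≤ n₁ := le_trans hk (Nat.min_le_left n₁ n₂)
  have h₂ : k ≤ n₂ := le_trans hk (Nat.min_le_right n₁ n₂)
  have hat_truncU : ∀ i, hat M (truncCols h₁ U) i
      = Matrix.of fun r (a : Fin k) => hat M U i r (Fin.castLE h₁ a) := by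
    intro i
    ext r a
    show _ = hat M U i r (Fin.castLE h₁ a)
    rw [hat_entry, hat_entry]
    rfl
  have hat_truncV : ∀ i, hat M (truncCols h₂ V) i
      = Matrix.of fun r (a : Fin k) => hat M V i r (Fin.castLE h₂ a) := by
    intro i
    ext r a
    show _ = hat M V i r (Fin.castLE h₂ a)
    rw [hat_entry, hat_entry]
    rfl
  have hat_truncS : ∀ i, hat M (truncBlock h₁ h₂ S) i
      = Matrix.of fun (a b : Fin k) => hat M S i (Fin.castLE h₁ a) (Fin.castLE h₂ b) := by
    intro i
    ext a b
    show _ = hat M S i (Fin.castLE h₁ a) (Fin.castLE h₂ b)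
    rw [hat_entry, hat_entry]
    rfl
  -- the truncated tensor in the transform domain
  have hAk : ∀ i, hat M (truncApprox M U S V k hk) i
      = hat M U i * (Matrix.of fun (a : Fin n₁) (b : Fin n₂) =>
          if (a : ℕ) < k ∧ (b : ℕ) < k then hat M S i a b else 0) * (hat M V i)ᵀ := by
    intro i
    unfold truncApprox
    rw [hat_starM M hMr, hat_starM M hMr, hat_transM M hMr,
      hat_truncU i, hat_truncV i, hat_truncS i]
    exact trunc_expand h₁ h₂ (hat M U i) (hat M S i) (hat M V i)
  -- the residual in the transform domain
  have hdiff : ∀ i, hat M (A - truncApprox M U S V k hk) i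
      = hat M U i * (Matrix.of fun (a : Fin n₁) (b : Fin n₂) =>
          if (a : ℕ) < k ∧ (b : ℕ) < k then 0 else hat M S i a b) * (hat M V i)ᵀ := by
    intro i
    rw [hat_sub, hA i, hAk i, ← Matrix.sub_mul, ← Matrix.mul_sub]
    congr 2
    ext a b
    by_cases h : (a : ℕ) < k ∧ (b : ℕ) < k
    · simp [h]
    · simp [h]
  -- the tail sum of squares
  have htails : ∀ i, sumSq (hat M (A - truncApprox M U S V k hk) i)
      = ∑ j : Fin (min n₁ n₂), if k ≤ (j : ℕ)
          then (hat M S i (dIdx₁ j) (dIdx₂ j))^2 else 0 := by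
    intro i
    rw [hdiff i]
    set F : Matrix (Fin n₁) (Fin n₂) ℝ := Matrix.of fun (a : Fin n₁) (b : Fin n₂) =>
      if (a : ℕ) < k ∧ (b : ℕ) < k then 0 else hat M S i a b with hF
    have hc1 : sumSq (hat M U i * F * (hat M V i)ᵀ) = sumSq F := by
      have hU2 : (hat M U i)ᵀ * ((hat M U i)ᵀ)ᵀ = 1 := by
        rw [Matrix.transpose_transpose]; exact hUo i
      have hV2 : ((hat M V i)ᵀ)ᵀ * (hat M V i)ᵀ = 1 := by
        rw [Matrix.transpose_transpose]; exact hVo' i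
      have := sumSq_conj (hat M U i)ᵀ (hat M V i)ᵀ F hU2 hV2
      rwa [Matrix.transpose_transpose] at this
    rw [hc1]
    have hFdiag : ∀ (a : Fin n₁) (b : Fin n₂), (a : ℕ) ≠ (b : ℕ) → (F a b)^2 = 0 := by
      intro a b hab
      have : F a b = 0 := by
        by_cases h : (a : ℕ) < k ∧ (b : ℕ) < k
        · simp [hF, h]
        · simp only [hF, Matrix.of_apply, if_neg h]
          exact hSVD.fdiag i a b hab
      rw [this]; simp
    show (∑ r : Fin n₁, ∑ cc : Fin n₂, (F r cc)^2) = _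
    rw [diag_pair_sum (fun a b => (F a b)^2) hFdiag]
    refine Finset.sum_congr rfl fun j _ => ?_
    by_cases hj : k ≤ (j : ℕ)
    · rw [if_pos hj]
      have : F (dIdx₁ j) (dIdx₂ j) = hat M S i (dIdx₁ j) (dIdx₂ j) := by
        simp only [hF, Matrix.of_apply]
        rw [if_neg]
        rintro ⟨hlt, -⟩
        exact absurd hlt (not_lt.mpr hj)
      rw [this]
    · rw [if_neg hj]
      have : F (dIdx₁ j) (dIdx₂ j) = 0 := by
        simp only [hF, Matrix.of_apply]
        rw [if_pos ⟨not_le.mp hj, not_le.mp hj⟩]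
      rw [this]
      simp
  -- matrix side: tensor of B
  set Bten : TI m → Matrix (Fin n₁) (Fin n₂) ℝ :=
    fun i => Matrix.of fun r j => B (r, i) j with hBten
  -- row space of B
  set Rspan : Submodule ℝ (Fin n₂ → ℝ) := Submodule.span ℝ (Set.range B) with hRspan
  have hrank : Module.finrank ℝ Rspan ≤ k := by
    have h1 : LinearMap.range (Matrix.mulVecLin Bᵀ) = Rspan := by
      rw [Matrix.range_mulVecLin]; rfl
    have h2 : Bᵀ.rank = Module.finrank ℝ Rspan := by
      unfold Matrix.rank
      rw [h1]
    rw [← h2, Matrix.rank_transpose]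
    exact hBrank
  set R : Submodule ℝ (EuclideanSpace ℝ (Fin n₂)) :=
    Submodule.map ((WithLp.linearEquiv 2 ℝ (Fin n₂ → ℝ)).symm :
      (Fin n₂ → ℝ) →ₗ[ℝ] EuclideanSpace ℝ (Fin n₂)) Rspan with hR
  have hfrR : Module.finrank ℝ R ≤ k := by
    rw [hR, LinearEquiv.finrank_map_eq]
    exact hrank
  have hYmem : ∀ i (r : Fin n₁), WithLp.toLp 2 (hat M Bten i r) ∈ R := by
    intro i r
    refine Submodule.mem_map.mpr ⟨hat M Bten i r, ?_, rfl⟩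
    have hrow : hat M Bten i r
        = ∑ j : TI m, (∏ k', M k' (i k') (j k')) • B (r, j) := by
      funext b
      rw [show hat M Bten i r b
          = ∑ j : TI m, (∏ k', M k' (i k') (j k')) * Bten j r b from hat_entry M Bten i r b]
      rw [Finset.sum_apply]
      refine Finset.sum_congr rfl fun j _ => ?_
      simp [hBten]
    rw [hrow]
    exact Submodule.sum_mem _ fun j _ =>
      Submodule.smul_mem _ _ (Submodule.subset_span ⟨(r, j), rfl⟩)
  -- Eckart–Young per slice
  have hEY : ∀ i, (∑ j : Fin (min n₁ n₂), if k ≤ (j : ℕ)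
        then (hat M S i (dIdx₁ j) (dIdx₂ j))^2 else 0)
      ≤ sumSq (hat M (A - Bten) i) := by
    intro i
    rw [hat_sub, hA i]
    exact eckartYoung (hat M U i) (hat M S i) (hat M V i) (hat M Bten i)
      (hUo i) (hUo' i) (hVo i) (hVo' i)
      (hSVD.fdiag i) (hSVD.nonneg i) (hSVD.descend i) R hfrR (hYmem i)
  -- Parseval on both residuals
  have h1 := hat_sumSq M c hMtM (A - truncApprox M U S V k hk)
  have h2 := hat_sumSq M c hMtM (A - Bten)
  have h3 : (∑ i : TI m, ∑ r : Fin n₁, ∑ cc : Fin n₂,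
        (hat M (A - truncApprox M U S V k hk) i r cc)^2)
      ≤ ∑ i : TI m, ∑ r : Fin n₁, ∑ cc : Fin n₂, (hat M (A - Bten) i r cc)^2 := by
    refine Finset.sum_le_sum fun i _ => ?_
    show sumSq (hat M (A - truncApprox M U S V k hk) i) ≤ sumSq (hat M (A - Bten) i)
    rw [htails i]
    exact hEY i
  rw [h1, h2] at h3
  have hmain : (∑ i : TI m, ∑ r : Fin n₁, ∑ cc : Fin n₂,
        ((A - truncApprox M U S V k hk) i r cc)^2)
      ≤ ∑ i : TI m, ∑ r : Fin n₁, ∑ cc : Fin n₂, ((A - Bten) i r cc)^2 :=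
    le_of_mul_le_mul_left h3 hw
  -- translate to the stated norms
  have hAmatEq : (∑ p : Fin n₁ × TI m, ∑ j : Fin n₂, ((Amat - B) p j)^2)
      = ∑ i : TI m, ∑ r : Fin n₁, ∑ j : Fin n₂, ((A - Bten) i r j)^2 := by
    rw [Fintype.sum_prod_type]
    rw [Finset.sum_comm]
    refine Finset.sum_congr rfl fun i _ => Finset.sum_congr rfl fun r _ =>
      Finset.sum_congr rfl fun j _ => ?_
    rw [hAmat]
    simp [hBten]
  unfold frob mFrob
  apply Real.sqrt_le_sqrt
  rw [hAmatEq]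
  exact hmain


end TSVDM
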